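/- Let (X, <, R) and (X', <', R') be two countable ordered bipartite graphs, in each of which the underlying coloured order is the generic 2-coloured linear order ℚ₂ (a countable dense linear order without endpoints in which both red and blue points are dense), every edge (a,b) with a red and b blue satisfies a < b, and the right generic witness property holds: for any finite disjoint sets A₁, A₂ of red points, the set of blue points joined to all members of A₁ and to none of A₂ is dense in (max(A₁ ∪ A₂), ∞), and for any finite disjoint sets B₁, B₂ of blue points, the set of red points joined to all members of B₁ and to none of B₂ is dense in (−∞, min(B₁ ∪ B₂)). Then (X, <, R) and (X', <', R') are isomorphic as ordered coloured bipartite graphs. -/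

import Mathlib

/-- The right generic witness property: for all finite disjoint sets `A₁, A₂` of red
points the set of blue points joined to everything in `A₁` and nothing in `A₂` is dense
in `(max (A₁ ∪ A₂), ∞)`, and for all finite disjoint sets `B₁, B₂` of blue points the
set of red points joined to everything in `B₁` and nothing in `B₂` is dense in
`(-∞, min (B₁ ∪ B₂))`. -/
def RightGenericWitness {X : Type*} [LinearOrder X] [DecidableEq X]
    (red : X → Bool) (R : X → X → Prop) : Prop :=
  (∀ A₁ A₂ : Finset X, (∀ a ∈ A₁, red a = true) → (∀ a ∈ A₂, red a = true) →
    Disjoint A₁ A₂ → ∀ hne : (A₁ ∪ A₂).Nonempty,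
    ∀ x y : X, (A₁ ∪ A₂).max' hne ≤ x → x < y →
      ∃ c, red c = false ∧ x < c ∧ c < y ∧
        (∀ a ∈ A₁, R a c) ∧ (∀ a ∈ A₂, ¬ R a c)) ∧
  (∀ B₁ B₂ : Finset X, (∀ b ∈ B₁, red b = false) → (∀ b ∈ B₂, red b = false) →
    Disjoint B₁ B₂ → ∀ hne : (B₁ ∪ B₂).Nonempty,
    ∀ x y : X, x < y → y ≤ (B₁ ∪ B₂).min' hne →
      ∃ c, red c = true ∧ x < c ∧ c < y ∧
        (∀ b ∈ B₁, R c b) ∧ (∀ b ∈ B₂, ¬ R c b))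

namespace Stmt18Aux

variable {α β : Type*}

/-- partial isomorphism condition on a finite set of pairs -/
def BGood [LinearOrder α] [LinearOrder β] (redα : α → Bool) (Rα : α → α → Prop)
    (redβ : β → Bool) (Rβ : β → β → Prop) (f : Finset (α × β)) : Prop :=
  (∀ p ∈ f, redβ p.2 = redα p.1) ∧
  ∀ p ∈ f, ∀ q ∈ f, cmp p.1 q.1 = cmp p.2 q.2 ∧ (Rα p.1 q.1 ↔ Rβ p.2 q.2)

lemma exists_colored_between [LinearOrder β] [Nonempty β] [NoMinOrder β] [NoMaxOrder β]
    (redβ : β → Bool)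
    (hdense : ∀ x y : β, x < y → (∃ z, x < z ∧ z < y ∧ redβ z = true) ∧
      (∃ z, x < z ∧ z < y ∧ redβ z = false))
    (col : Bool) (L H : Finset β) (hLH : ∀ x ∈ L, ∀ y ∈ H, x < y) :
    ∃ b, redβ b = col ∧ (∀ x ∈ L, x < b) ∧ (∀ y ∈ H, b < y) := by
  have key : ∀ x y : β, x < y → ∃ z, x < z ∧ z < y ∧ redβ z = col := by
    intro x y hxy
    cases col
    · exact (hdense x y hxy).2
    · exact (hdense x y hxy).1
  rcases L.eq_empty_or_nonempty with rfl | hL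
  · rcases H.eq_empty_or_nonempty with rfl | hH
    · obtain ⟨m⟩ := ‹Nonempty β›
      obtain ⟨x, hx⟩ := exists_lt m
      obtain ⟨z, _, _, hz⟩ := key x m hx
      exact ⟨z, hz, by simp, by simp⟩
    · obtain ⟨x, hx⟩ := exists_lt (H.min' hH)
      obtain ⟨z, _, h2, hz⟩ := key x _ hx
      exact ⟨z, hz, by simp, fun y hy => lt_of_lt_of_le h2 (H.min'_le y hy)⟩
  · rcases H.eq_empty_or_nonempty with rfl | hH
    · obtain ⟨y, hy⟩ := exists_gt (L.max' hL)
      obtain ⟨z, h1, _, hz⟩ := key _ y hy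
      exact ⟨z, hz, fun x hx => lt_of_le_of_lt (L.le_max' x hx) h1, by simp⟩
    · have h := hLH _ (L.max'_mem hL) _ (H.min'_mem hH)
      obtain ⟨z, h1, h2, hz⟩ := key _ _ h
      exact ⟨z, hz, fun x hx => lt_of_le_of_lt (L.le_max' x hx) h1,
        fun y hy => lt_of_lt_of_le h2 (H.min'_le y hy)⟩

end Stmt18Aux

namespace Stmt18Aux
lemma exists_across [LinearOrder α] [LinearOrder β] [DecidableEq β]
    [Nonempty β] [NoMinOrder β] [NoMaxOrder β]
    (redα : α → Bool) (Rα : α → α → Prop)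
    (hsymmα : ∀ x y, Rα x y → Rα y x)
    (hbipα : ∀ x y, Rα x y → redα x ≠ redα y)
    (hdirα : ∀ x y, redα x = true → redα y = false → Rα x y → x < y)
    (redβ : β → Bool) (Rβ : β → β → Prop)
    (hsymmβ : ∀ x y, Rβ x y → Rβ y x)
    (hbipβ : ∀ x y, Rβ x y → redβ x ≠ redβ y)
    (hdenseβ : ∀ x y : β, x < y → (∃ z, x < z ∧ z < y ∧ redβ z = true) ∧
      (∃ z, x < z ∧ z < y ∧ redβ z = false))
    (hdirβ : ∀ x y, redβ x = true → redβ y = false → Rβ x y → x < y)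
    (hWβ : RightGenericWitness redβ Rβ)
    (f : Finset (α × β)) (hf : BGood redα Rα redβ Rβ f) (a : α) :
    ∃ b, redβ b = redα a ∧ ∀ p ∈ f, cmp p.1 a = cmp p.2 b ∧ (Rα a p.1 ↔ Rβ b p.2) := by
  classical
  by_cases h : ∃ b, (a, b) ∈ f
  · obtain ⟨b, hb⟩ := h
    exact ⟨b, hf.1 _ hb, fun p hp =>
      ⟨(hf.2 p hp (a, b) hb).1, (hf.2 (a, b) hb p hp).2⟩⟩
  have hne' : ∀ p ∈ f, p.1 ≠ a := fun p hp he => h ⟨p.2, by rwa [← he, Prod.mk.eta]⟩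
  set lo := f.filter (fun p => p.1 < a) with hlo
  set hi := f.filter (fun p => a < p.1) with hhi
  set L := lo.image Prod.snd with hLdef
  set H := hi.image Prod.snd with hHdef
  have memL : ∀ p ∈ f, p.1 < a → p.2 ∈ L := fun p hp h' =>
    Finset.mem_image_of_mem _ (Finset.mem_filter.2 ⟨hp, h'⟩)
  have memH : ∀ p ∈ f, a < p.1 → p.2 ∈ H := fun p hp h' =>
    Finset.mem_image_of_mem _ (Finset.mem_filter.2 ⟨hp, h'⟩)
  have hLH : ∀ x ∈ L, ∀ y ∈ H, x < y := by
    intro x hx y hy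
    rw [Finset.mem_image] at hx hy
    obtain ⟨p, hp, rfl⟩ := hx
    obtain ⟨q, hq, rfl⟩ := hy
    rw [Finset.mem_filter] at hp hq
    rw [← lt_iff_lt_of_cmp_eq_cmp (hf.2 _ hp.1 _ hq.1).1]
    exact hp.2.trans hq.2
  suffices h' : ∃ b, redβ b = redα a ∧ (∀ x ∈ L, x < b) ∧ (∀ y ∈ H, b < y) ∧
      (∀ p ∈ f, (Rα a p.1 ↔ Rβ b p.2)) by
    obtain ⟨b, hcolb, hLb, hHb, hRb⟩ := h'
    refine ⟨b, hcolb, fun p hp => ⟨?_, hRb p hp⟩⟩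
    rcases lt_trichotomy p.1 a with hlt | heq | hgt
    · rw [(cmp_eq_lt_iff _ _).2 hlt, (cmp_eq_lt_iff _ _).2 (hLb _ (memL p hp hlt))]
    · exact absurd heq (hne' p hp)
    · rw [(cmp_eq_gt_iff _ _).2 hgt, (cmp_eq_gt_iff _ _).2 (hHb _ (memH p hp hgt))]
  -- some generic facts
  have inj2 : ∀ p ∈ f, ∀ q ∈ f, p.2 = q.2 → p.1 = q.1 := by
    intro p hp q hq h2
    have := (hf.2 p hp q hq).1
    rw [h2, cmp_self_eq_eq] at this
    exact (cmp_eq_eq_iff _ _).1 this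
  cases hcol : redα a with
  | true =>
    -- a is red; constraints come from blue points above a
    set S₁ := hi.filter (fun p => Rα a p.1) with hS₁
    set S₂ := hi.filter (fun p => ¬ Rα a p.1 ∧ redα p.1 = false) with hS₂
    set B₁ := S₁.image Prod.snd with hB₁
    set B₂ := S₂.image Prod.snd with hB₂
    have hS₁f : S₁ ⊆ f := (Finset.filter_subset _ _).trans (Finset.filter_subset _ _)
    have hS₂f : S₂ ⊆ f := (Finset.filter_subset _ _).trans (Finset.filter_subset _ _)
    have blue₁ : ∀ y ∈ B₁, redβ y = false := by
      intro y hy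
      obtain ⟨p, hp, rfl⟩ := Finset.mem_image.1 hy
      have hr : Rα a p.1 := (Finset.mem_filter.1 hp).2
      have : redα p.1 = false :=
        Bool.eq_false_iff.2 (fun ht => hbipα a p.1 hr (hcol.trans ht.symm))
      rw [hf.1 p (hS₁f hp), this]
    have blue₂ : ∀ y ∈ B₂, redβ y = false := by
      intro y hy
      obtain ⟨p, hp, rfl⟩ := Finset.mem_image.1 hy
      rw [hf.1 p (hS₂f hp), (Finset.mem_filter.1 hp).2.2]
    have disj : Disjoint B₁ B₂ := by
      rw [Finset.disjoint_left]
      rintro y hy₁ hy₂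
      obtain ⟨p, hp, rfl⟩ := Finset.mem_image.1 hy₁
      obtain ⟨q, hq, h2⟩ := Finset.mem_image.1 hy₂
      have h1 : q.1 = p.1 := inj2 q (hS₂f hq) p (hS₁f hp) h2
      have := (Finset.mem_filter.1 hq).2.1
      rw [h1] at this
      exact this (Finset.mem_filter.1 hp).2
    have hBH₁ : B₁ ⊆ H := Finset.image_subset_image (Finset.filter_subset _ _)
    have hBH₂ : B₂ ⊆ H := Finset.image_subset_image (Finset.filter_subset _ _)
    rcases (B₁ ∪ B₂).eq_empty_or_nonempty with hBe | hne
    · -- no constraints from relations: just pick a red point in the interval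
      obtain ⟨b, hbcol, hbL, hbH⟩ := exists_colored_between redβ hdenseβ true L H hLH
      refine ⟨b, hbcol, hbL, hbH, ?_⟩
      intro p hp
      rcases lt_trichotomy p.1 a with hlt | heq | hgt
      · refine iff_of_false (fun hr => ?_) (fun hr => ?_)
        · have hblue : redα p.1 = false :=
            Bool.eq_false_iff.2 (fun ht => hbipα a p.1 hr (hcol.trans ht.symm))
          exact absurd (hdirα a p.1 hcol hblue hr) (not_lt.2 hlt.le)
        · have hblue : redβ p.2 = false :=
            Bool.eq_false_iff.2 (fun ht => hbipβ b p.2 hr (hbcol.trans ht.symm))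
          exact absurd (hdirβ b p.2 hbcol hblue hr) (not_lt.2 (hbL _ (memL p hp hlt)).le)
      · exact absurd heq (hne' p hp)
      · have hpi : p ∈ hi := Finset.mem_filter.2 ⟨hp, hgt⟩
        cases hpb : redα p.1 with
        | false =>
          exfalso
          by_cases hra : Rα a p.1
          · have : p.2 ∈ B₁ := Finset.mem_image_of_mem _ (Finset.mem_filter.2 ⟨hpi, hra⟩)
            exact absurd (Finset.mem_union_left _ this) (by rw [hBe]; simp)
          · have : p.2 ∈ B₂ :=
              Finset.mem_image_of_mem _ (Finset.mem_filter.2 ⟨hpi, hra, hpb⟩)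
            exact absurd (Finset.mem_union_right _ this) (by rw [hBe]; simp)
        | true =>
          refine iff_of_false (fun hr => hbipα a p.1 hr (hcol.trans hpb.symm)) (fun hr => ?_)
          exact hbipβ b p.2 hr (hbcol.trans ((hf.1 p hp).trans hpb).symm)
    · -- use the witness property
      have hHne : H.Nonempty := by
        obtain ⟨y, hy⟩ := hne
        rcases Finset.mem_union.1 hy with hy | hy
        · exact ⟨y, hBH₁ hy⟩
        · exact ⟨y, hBH₂ hy⟩
      set u := H.min' hHne with hu
      obtain ⟨x, hx1, hx2⟩ : ∃ x, (∀ z ∈ L, z ≤ x) ∧ x < u := by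
        rcases L.eq_empty_or_nonempty with hLe | hLn
        · obtain ⟨x, hx⟩ := exists_lt u
          exact ⟨x, by simp [hLe], hx⟩
        · exact ⟨L.max' hLn, fun z hz => L.le_max' z hz,
            hLH _ (L.max'_mem hLn) _ (H.min'_mem hHne)⟩
      have hmin : u ≤ (B₁ ∪ B₂).min' hne := by
        apply H.min'_le
        rcases Finset.mem_union.1 ((B₁ ∪ B₂).min'_mem hne) with hy | hy
        · exact hBH₁ hy
        · exact hBH₂ hy
      obtain ⟨c, hcred, hxc, hcu, hrel₁, hrel₂⟩ :=
        hWβ.2 B₁ B₂ blue₁ blue₂ disj hne x u hx2 hmin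
      refine ⟨c, hcred, fun z hz => lt_of_le_of_lt (hx1 z hz) hxc,
        fun y hy => lt_of_lt_of_le hcu (H.min'_le y hy), ?_⟩
      intro p hp
      rcases lt_trichotomy p.1 a with hlt | heq | hgt
      · refine iff_of_false (fun hr => ?_) (fun hr => ?_)
        · have hblue : redα p.1 = false :=
            Bool.eq_false_iff.2 (fun ht => hbipα a p.1 hr (hcol.trans ht.symm))
          exact absurd (hdirα a p.1 hcol hblue hr) (not_lt.2 hlt.le)
        · have hblue : redβ p.2 = false :=
            Bool.eq_false_iff.2 (fun ht => hbipβ c p.2 hr (hcred.trans ht.symm))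
          have hp2 : p.2 < c := lt_of_le_of_lt (hx1 _ (memL p hp hlt)) hxc
          exact absurd (hdirβ c p.2 hcred hblue hr) (not_lt.2 hp2.le)
      · exact absurd heq (hne' p hp)
      · have hpi : p ∈ hi := Finset.mem_filter.2 ⟨hp, hgt⟩
        cases hpb : redα p.1 with
        | false =>
          by_cases hra : Rα a p.1
          · exact iff_of_true hra
              (hrel₁ p.2 (Finset.mem_image_of_mem _ (Finset.mem_filter.2 ⟨hpi, hra⟩)))
          · exact iff_of_false hra
              (hrel₂ p.2 (Finset.mem_image_of_mem _ (Finset.mem_filter.2 ⟨hpi, hra, hpb⟩)))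
        | true =>
          refine iff_of_false (fun hr => hbipα a p.1 hr (hcol.trans hpb.symm)) (fun hr => ?_)
          exact hbipβ c p.2 hr (hcred.trans ((hf.1 p hp).trans hpb).symm)
  | false =>
    -- a is blue; constraints come from red points below a
    set S₁ := lo.filter (fun p => Rα a p.1) with hS₁
    set S₂ := lo.filter (fun p => ¬ Rα a p.1 ∧ redα p.1 = true) with hS₂
    set A₁ := S₁.image Prod.snd with hA₁
    set A₂ := S₂.image Prod.snd with hA₂
    have hS₁f : S₁ ⊆ f := (Finset.filter_subset _ _).trans (Finset.filter_subset _ _)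
    have hS₂f : S₂ ⊆ f := (Finset.filter_subset _ _).trans (Finset.filter_subset _ _)
    have red₁ : ∀ y ∈ A₁, redβ y = true := by
      intro y hy
      obtain ⟨p, hp, rfl⟩ := Finset.mem_image.1 hy
      have hr : Rα a p.1 := (Finset.mem_filter.1 hp).2
      have : redα p.1 = true := by
        cases ht : redα p.1 with
        | false => exact absurd (hcol.trans ht.symm) (hbipα a p.1 hr)
        | true => rfl
      rw [hf.1 p (hS₁f hp), this]
    have red₂ : ∀ y ∈ A₂, redβ y = true := by
      intro y hy
      obtain ⟨p, hp, rfl⟩ := Finset.mem_image.1 hy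
      rw [hf.1 p (hS₂f hp), (Finset.mem_filter.1 hp).2.2]
    have disj : Disjoint A₁ A₂ := by
      rw [Finset.disjoint_left]
      rintro y hy₁ hy₂
      obtain ⟨p, hp, rfl⟩ := Finset.mem_image.1 hy₁
      obtain ⟨q, hq, h2⟩ := Finset.mem_image.1 hy₂
      have h1 : q.1 = p.1 := inj2 q (hS₂f hq) p (hS₁f hp) h2
      have := (Finset.mem_filter.1 hq).2.1
      rw [h1] at this
      exact this (Finset.mem_filter.1 hp).2
    have hAL₁ : A₁ ⊆ L := Finset.image_subset_image (Finset.filter_subset _ _)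
    have hAL₂ : A₂ ⊆ L := Finset.image_subset_image (Finset.filter_subset _ _)
    rcases (A₁ ∪ A₂).eq_empty_or_nonempty with hAe | hne
    · obtain ⟨b, hbcol, hbL, hbH⟩ := exists_colored_between redβ hdenseβ false L H hLH
      refine ⟨b, hbcol, hbL, hbH, ?_⟩
      intro p hp
      rcases lt_trichotomy p.1 a with hlt | heq | hgt
      · have hpl : p ∈ lo := Finset.mem_filter.2 ⟨hp, hlt⟩
        cases hpb : redα p.1 with
        | true =>
          exfalso
          by_cases hra : Rα a p.1
          · have : p.2 ∈ A₁ := Finset.mem_image_of_mem _ (Finset.mem_filter.2 ⟨hpl, hra⟩)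
            exact absurd (Finset.mem_union_left _ this) (by rw [hAe]; simp)
          · have : p.2 ∈ A₂ :=
              Finset.mem_image_of_mem _ (Finset.mem_filter.2 ⟨hpl, hra, hpb⟩)
            exact absurd (Finset.mem_union_right _ this) (by rw [hAe]; simp)
        | false =>
          refine iff_of_false (fun hr => hbipα a p.1 hr (hcol.trans hpb.symm)) (fun hr => ?_)
          exact hbipβ b p.2 hr (hbcol.trans ((hf.1 p hp).trans hpb).symm)
      · exact absurd heq (hne' p hp)
      · refine iff_of_false (fun hr => ?_) (fun hr => ?_)
        · cases hpb : redα p.1 with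
          | true => exact absurd (hdirα p.1 a hpb hcol (hsymmα _ _ hr)) (not_lt.2 hgt.le)
          | false => exact hbipα a p.1 hr (hcol.trans hpb.symm)
        · have hp2 : b < p.2 := hbH _ (memH p hp hgt)
          cases hpb : redβ p.2 with
          | true => exact absurd (hdirβ p.2 b hpb hbcol (hsymmβ _ _ hr)) (not_lt.2 hp2.le)
          | false => exact hbipβ b p.2 hr (hbcol.trans hpb.symm)
    · have hLne : L.Nonempty := by
        obtain ⟨y, hy⟩ := hne
        rcases Finset.mem_union.1 hy with hy | hy
        · exact ⟨y, hAL₁ hy⟩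
        · exact ⟨y, hAL₂ hy⟩
      set l := L.max' hLne with hl
      obtain ⟨y, hy1, hy2⟩ : ∃ y, l < y ∧ (∀ z ∈ H, y ≤ z) := by
        rcases H.eq_empty_or_nonempty with hHe | hHn
        · obtain ⟨y, hy⟩ := exists_gt l
          exact ⟨y, hy, by simp [hHe]⟩
        · exact ⟨H.min' hHn, hLH _ (L.max'_mem hLne) _ (H.min'_mem hHn),
            fun z hz => H.min'_le z hz⟩
      have hmax : (A₁ ∪ A₂).max' hne ≤ l := by
        apply L.le_max'
        rcases Finset.mem_union.1 ((A₁ ∪ A₂).max'_mem hne) with hy | hy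
        · exact hAL₁ hy
        · exact hAL₂ hy
      obtain ⟨c, hcblue, hlc, hcy, hrel₁, hrel₂⟩ :=
        hWβ.1 A₁ A₂ red₁ red₂ disj hne l y hmax hy1
      refine ⟨c, hcblue, fun z hz => lt_of_le_of_lt (L.le_max' z hz) hlc,
        fun z hz => lt_of_lt_of_le hcy (hy2 z hz), ?_⟩
      intro p hp
      rcases lt_trichotomy p.1 a with hlt | heq | hgt
      · have hpl : p ∈ lo := Finset.mem_filter.2 ⟨hp, hlt⟩
        cases hpb : redα p.1 with
        | true =>
          by_cases hra : Rα a p.1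
          · exact iff_of_true hra (hsymmβ _ _
              (hrel₁ p.2 (Finset.mem_image_of_mem _ (Finset.mem_filter.2 ⟨hpl, hra⟩))))
          · exact iff_of_false hra (fun hc =>
              hrel₂ p.2 (Finset.mem_image_of_mem _ (Finset.mem_filter.2 ⟨hpl, hra, hpb⟩))
                (hsymmβ _ _ hc))
        | false =>
          refine iff_of_false (fun hr => hbipα a p.1 hr (hcol.trans hpb.symm)) (fun hr => ?_)
          exact hbipβ c p.2 hr (hcblue.trans ((hf.1 p hp).trans hpb).symm)
      · exact absurd heq (hne' p hp)
      · refine iff_of_false (fun hr => ?_) (fun hr => ?_)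
        · cases hpb : redα p.1 with
          | true => exact absurd (hdirα p.1 a hpb hcol (hsymmα _ _ hr)) (not_lt.2 hgt.le)
          | false => exact hbipα a p.1 hr (hcol.trans hpb.symm)
        · have hp2 : c < p.2 := lt_of_lt_of_le hcy (hy2 _ (memH p hp hgt))
          cases hpb : redβ p.2 with
          | true => exact absurd (hdirβ p.2 c hpb hcblue (hsymmβ _ _ hr)) (not_lt.2 hp2.le)
          | false => exact hbipβ c p.2 hr (hcblue.trans hpb.symm)
end Stmt18Aux

namespace Stmt18Aux

variable {α β : Type*} [LinearOrder α] [LinearOrder β]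

lemma BGood.insert' {redα : α → Bool} {Rα : α → α → Prop} {redβ : β → Bool}
    {Rβ : β → β → Prop} {f : Finset (α × β)}
    (hsymmα : ∀ x y, Rα x y → Rα y x) (hirrα : ∀ x, ¬ Rα x x)
    (hsymmβ : ∀ x y, Rβ x y → Rβ y x) (hirrβ : ∀ x, ¬ Rβ x x)
    (hf : BGood redα Rα redβ Rβ f) {a : α} {b : β}
    (hcol : redβ b = redα a)
    (hb : ∀ p ∈ f, cmp p.1 a = cmp p.2 b ∧ (Rα a p.1 ↔ Rβ b p.2))
    (g : Finset (α × β)) (hg : ∀ p, p ∈ g ↔ p = (a, b) ∨ p ∈ f) :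
    BGood redα Rα redβ Rβ g := by
  constructor
  · intro p hp
    rcases (hg p).1 hp with rfl | hp
    · exact hcol
    · exact hf.1 p hp
  · intro p hp q hq
    rcases (hg p).1 hp with rfl | hp <;> rcases (hg q).1 hq with rfl | hq
    · exact ⟨by simp [cmp_self_eq_eq], iff_of_false (hirrα a) (hirrβ b)⟩
    · exact ⟨cmp_eq_cmp_symm.1 (hb q hq).1, (hb q hq).2⟩
    · refine ⟨(hb p hp).1, ?_⟩
      constructor
      · intro h; exact hsymmβ _ _ ((hb p hp).2.1 (hsymmα _ _ h))
      · intro h; exact hsymmα _ _ ((hb p hp).2.2 (hsymmβ _ _ h))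
    · exact hf.2 p hp q hq

variable (redα : α → Bool) (Rα : α → α → Prop) (redβ : β → Bool) (Rβ : β → β → Prop)

/-- The type of colored/relational partial isomorphisms. -/
def PIso : Type _ := { f : Finset (α × β) // BGood redα Rα redβ Rβ f }

instance : Preorder (PIso redα Rα redβ Rβ) := Subtype.preorder _

instance : Inhabited (PIso redα Rα redβ Rβ) :=
  ⟨⟨∅, ⟨fun _ h => absurd h (Finset.notMem_empty _), fun _ h => absurd h (Finset.notMem_empty _)⟩⟩⟩

variable {redα Rα redβ Rβ}

/-- Flip a partial isomorphism. -/
protected def PIso.comm [DecidableEq α] [DecidableEq β] : PIso redα Rα redβ Rβ → PIso redβ Rβ redα Rα :=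
  Subtype.map (Finset.image (Equiv.prodComm α β)) fun f hf => by
    constructor
    · intro p hp
      rw [← Finset.mem_coe, Finset.coe_image, Equiv.image_eq_preimage_symm] at hp
      exact (hf.1 _ hp).symm
    · intro p hp q hq
      rw [← Finset.mem_coe, Finset.coe_image, Equiv.image_eq_preimage_symm] at hp hq
      exact ⟨(hf.2 _ hp _ hq).1.symm, (hf.2 _ hp _ hq).2.symm⟩

section Cofinals

variable [DecidableEq α] [DecidableEq β]
variable (hsymmα : ∀ x y, Rα x y → Rα y x) (hirrα : ∀ x, ¬ Rα x x)
  (hbipα : ∀ x y, Rα x y → redα x ≠ redα y)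
  (hdirα : ∀ x y, redα x = true → redα y = false → Rα x y → x < y)
  (hsymmβ : ∀ x y, Rβ x y → Rβ y x) (hirrβ : ∀ x, ¬ Rβ x x)
  (hbipβ : ∀ x y, Rβ x y → redβ x ≠ redβ y)
  (hdirβ : ∀ x y, redβ x = true → redβ y = false → Rβ x y → x < y)

/-- Partial isos defined at `a : α` are cofinal. -/
def definedAtLeft [Nonempty β] [NoMinOrder β] [NoMaxOrder β]
    (hdenseβ : ∀ x y : β, x < y → (∃ z, x < z ∧ z < y ∧ redβ z = true) ∧
      (∃ z, x < z ∧ z < y ∧ redβ z = false))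
    (hWβ : RightGenericWitness redβ Rβ) (a : α) :
    Order.Cofinal (PIso redα Rα redβ Rβ) where
  carrier := {f | ∃ b : β, (a, b) ∈ f.val}
  isCofinal f := by
    obtain ⟨b, hcol, hb⟩ := exists_across redα Rα hsymmα hbipα hdirα redβ Rβ hsymmβ hbipβ
      hdenseβ hdirβ hWβ f.val f.prop a
    exact ⟨⟨insert (a, b) f.val,
        BGood.insert' hsymmα hirrα hsymmβ hirrβ f.prop hcol hb _
          (fun p => Finset.mem_insert)⟩,
      ⟨b, Finset.mem_insert_self _ _⟩, Finset.subset_insert _ _⟩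

/-- Partial isos defined at `b : β` are cofinal, by symmetry. -/
def definedAtRight [Nonempty α] [NoMinOrder α] [NoMaxOrder α]
    (hdenseα : ∀ x y : α, x < y → (∃ z, x < z ∧ z < y ∧ redα z = true) ∧
      (∃ z, x < z ∧ z < y ∧ redα z = false))
    (hWα : RightGenericWitness redα Rα) (b : β) :
    Order.Cofinal (PIso redα Rα redβ Rβ) where
  carrier := {f | ∃ a : α, (a, b) ∈ f.val}
  isCofinal f := by
    rcases (definedAtLeft hsymmβ hirrβ hbipβ hdirβ hsymmα hirrα hbipα hdirα
        hdenseα hWα b).isCofinal f.comm with ⟨f', ⟨a, ha⟩, hl⟩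
    refine ⟨f'.comm, ⟨a, ?_⟩, ?_⟩
    · change (a, b) ∈ f'.val.image _
      rwa [← Finset.mem_coe, Finset.coe_image, Equiv.image_eq_preimage_symm]
    · change _ ⊆ f'.val.image _
      rwa [← Finset.coe_subset, Finset.coe_image, ← Equiv.symm_image_subset, ← Finset.coe_image,
        Finset.coe_subset]

end Cofinals

end Stmt18Aux

/-- Any two countable ordered bipartite graphs whose underlying coloured order is ℚ₂
(no endpoints, both colours dense), in which every edge goes from a red point up to a
blue point, and which satisfy the right generic witness property, are isomorphic. -/
theorem stmt18 {X X' : Type*} [LinearOrder X] [LinearOrder X']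
    [Countable X] [Countable X'] [DecidableEq X] [DecidableEq X']
    [Nonempty X] [NoMinOrder X] [NoMaxOrder X]
    [Nonempty X'] [NoMinOrder X'] [NoMaxOrder X']
    (red : X → Bool) (R : X → X → Prop)
    (hSymm : ∀ x y, R x y → R y x) (hIrr : ∀ x, ¬ R x x)
    (hBip : ∀ x y, R x y → red x ≠ red y)
    (hdense : ∀ x y : X, x < y →
      (∃ z, x < z ∧ z < y ∧ red z = true) ∧ (∃ z, x < z ∧ z < y ∧ red z = false))
    (hdir : ∀ a b : X, red a = true → red b = false → R a b → a < b)
    (hW : RightGenericWitness red R)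
    (red' : X' → Bool) (R' : X' → X' → Prop)
    (hSymm' : ∀ x y, R' x y → R' y x) (hIrr' : ∀ x, ¬ R' x x)
    (hBip' : ∀ x y, R' x y → red' x ≠ red' y)
    (hdense' : ∀ x y : X', x < y →
      (∃ z, x < z ∧ z < y ∧ red' z = true) ∧ (∃ z, x < z ∧ z < y ∧ red' z = false))
    (hdir' : ∀ a b : X', red' a = true → red' b = false → R' a b → a < b)
    (hW' : RightGenericWitness red' R') :
    ∃ g : X ≃ X', (∀ x y : X, x < y ↔ g x < g y) ∧
      (∀ x : X, red' (g x) = red x) ∧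
      (∀ x y : X, R x y ↔ R' (g x) (g y)) := by
  open Stmt18Aux in
  cases nonempty_encodable X
  cases nonempty_encodable X'
  let to_cofinal : X ⊕ X' → Order.Cofinal (Stmt18Aux.PIso red R red' R') := fun p =>
    Sum.recOn p
      (Stmt18Aux.definedAtLeft hSymm hIrr hBip hdir hSymm' hIrr' hBip' hdir' hdense' hW')
      (Stmt18Aux.definedAtRight hSymm hIrr hBip hdir hSymm' hIrr' hBip' hdir' hdense hW)
  let our_ideal : Order.Ideal (Stmt18Aux.PIso red R red' R') :=
    Order.idealOfCofinals default to_cofinal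
  have hF : ∀ a : X, ∃ b : X', ∃ f ∈ our_ideal, (a, b) ∈ f.val := by
    intro a
    obtain ⟨f, ⟨b, hb⟩, hf⟩ :=
      Order.cofinal_meets_idealOfCofinals default to_cofinal (Sum.inl a)
    exact ⟨b, f, hf, hb⟩
  have hG : ∀ b : X', ∃ a : X, ∃ f ∈ our_ideal, (a, b) ∈ f.val := by
    intro b
    obtain ⟨f, ⟨a, ha⟩, hf⟩ :=
      Order.cofinal_meets_idealOfCofinals default to_cofinal (Sum.inr b)
    exact ⟨a, f, hf, ha⟩
  choose F hFmem using hF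
  choose G hGmem using hG
  have key : ∀ (a : X) (b : X'), cmp a (G b) = cmp (F a) b := by
    intro a b
    obtain ⟨f, hf, ha⟩ := hFmem a
    obtain ⟨g, hg, hb⟩ := hGmem b
    obtain ⟨m, _, fm, gm⟩ := our_ideal.directed _ hf _ hg
    exact (m.prop.2 (a, F a) (fm ha) (G b, b) (gm hb)).1
  let e : X ≃o X' := OrderIso.ofCmpEqCmp F G key
  refine ⟨e.toEquiv, fun x y => e.lt_iff_lt.symm, ?_, ?_⟩
  · intro x
    obtain ⟨f, hf, hx⟩ := hFmem x
    exact f.prop.1 _ hx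
  · intro x y
    obtain ⟨f, hf, hx⟩ := hFmem x
    obtain ⟨g, hg, hy⟩ := hFmem y
    obtain ⟨m, _, fm, gm⟩ := our_ideal.directed _ hf _ hg
    exact (m.prop.2 (x, F x) (fm hx) (y, F y) (gm hy)).2
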